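/- The mixed graphs Γ₁ (path a—b→c with one undirected edge {a,b} and one directed edge from b to c) and Γ₂ (path x←y→z with both edges directed away from y) are not isomorphic as mixed graphs, even though the associated twisted right-angled Artin groups are isomorphic. -/

import Mathlib

/-- A mixed graph on a vertex type `V`: a symmetric set of undirected edges together
with a set of directed edges (`dir a b` means a directed edge from `a` to `b`),
with no edge both directed and undirected and no loops or doubled directed edges. -/
structure MixedGraph (V : Type*) where
  und : V → V → Prop
  dir : V → V → Prop

/-- An isomorphism of mixed graphs: a bijection of vertices preserving undirected
edges and preserving directed edges with their orientation. -/
def MixedGraph.Iso {V W : Type*} (Γ₁ : MixedGraph V) (Γ₂ : MixedGraph W) : Prop :=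
  ∃ e : V ≃ W, (∀ a b, Γ₁.und a b ↔ Γ₂.und (e a) (e b)) ∧
    (∀ a b, Γ₁.dir a b ↔ Γ₂.dir (e a) (e b))

/-- Γ₁ : path `a — b → c` with undirected edge `{a,b}` and directed edge `b → c`. -/
def Gamma1 : MixedGraph (Fin 3) where
  und a b := (a = 0 ∧ b = 1) ∨ (a = 1 ∧ b = 0)
  dir a b := a = 1 ∧ b = 2

/-- Γ₂ : path `x ← y → z` with directed edges `y → x` and `y → z`. -/
def Gamma2 : MixedGraph (Fin 3) where
  und _ _ := False
  dir a b := a = 1 ∧ (b = 0 ∨ b = 2)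

/-- The relations of the tRAAG of a mixed graph. -/
def traagRels {V : Type*} (Γ : MixedGraph V) : Set (FreeGroup V) :=
  {r | (∃ a b, Γ.und a b ∧
          r = FreeGroup.of a * FreeGroup.of b * (FreeGroup.of a)⁻¹ * (FreeGroup.of b)⁻¹) ∨
       (∃ a b, Γ.dir a b ∧
          r = FreeGroup.of a * FreeGroup.of b * FreeGroup.of a * (FreeGroup.of b)⁻¹)}

lemma mk_rel_eq_one {α : Type*} {rels : Set (FreeGroup α)} {r : FreeGroup α} (h : r ∈ rels) :
    PresentedGroup.mk rels r = 1 :=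
  (QuotientGroup.eq_one_iff r).mpr (Subgroup.subset_normalClosure h)

-- relations in the presented group of Γ₂
lemma g2_rel_x : (PresentedGroup.of 1 : PresentedGroup (traagRels Gamma2)) *
    PresentedGroup.of 0 * PresentedGroup.of 1 * (PresentedGroup.of 0)⁻¹ = 1 := by
  have h : (FreeGroup.of (1 : Fin 3) * FreeGroup.of 0 * FreeGroup.of 1 * (FreeGroup.of 0)⁻¹)
      ∈ traagRels Gamma2 := Or.inr ⟨1, 0, ⟨rfl, Or.inl rfl⟩, rfl⟩
  have := mk_rel_eq_one h
  simpa [PresentedGroup.of, map_mul, map_inv] using this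

lemma g2_rel_z : (PresentedGroup.of 1 : PresentedGroup (traagRels Gamma2)) *
    PresentedGroup.of 2 * PresentedGroup.of 1 * (PresentedGroup.of 2)⁻¹ = 1 := by
  have h : (FreeGroup.of (1 : Fin 3) * FreeGroup.of 2 * FreeGroup.of 1 * (FreeGroup.of 2)⁻¹)
      ∈ traagRels Gamma2 := Or.inr ⟨1, 2, ⟨rfl, Or.inr rfl⟩, rfl⟩
  have := mk_rel_eq_one h
  simpa [PresentedGroup.of, map_mul, map_inv] using this

-- relations in the presented group of Γ₁
lemma g1_rel_comm : (PresentedGroup.of 0 : PresentedGroup (traagRels Gamma1)) *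
    PresentedGroup.of 1 = PresentedGroup.of 1 * PresentedGroup.of 0 := by
  have h : (FreeGroup.of (0 : Fin 3) * FreeGroup.of 1 * (FreeGroup.of 0)⁻¹ * (FreeGroup.of 1)⁻¹)
      ∈ traagRels Gamma1 := Or.inl ⟨0, 1, Or.inl ⟨rfl, rfl⟩, rfl⟩
  have h2 := mk_rel_eq_one h
  simp only [PresentedGroup.of, map_mul, map_inv] at h2
  exact mul_inv_eq_iff_eq_mul.mp (mul_inv_eq_one.mp h2)

lemma g1_rel_bc : (PresentedGroup.of 1 : PresentedGroup (traagRels Gamma1)) *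
    PresentedGroup.of 2 * PresentedGroup.of 1 * (PresentedGroup.of 2)⁻¹ = 1 := by
  have h : (FreeGroup.of (1 : Fin 3) * FreeGroup.of 2 * FreeGroup.of 1 * (FreeGroup.of 2)⁻¹)
      ∈ traagRels Gamma1 := Or.inr ⟨1, 2, ⟨rfl, rfl⟩, rfl⟩
  have := mk_rel_eq_one h
  simpa [PresentedGroup.of, map_mul, map_inv] using this

/-- The map `a ↦ z x⁻¹, b ↦ y, c ↦ x`. -/
def fmap : Fin 3 → PresentedGroup (traagRels Gamma2) :=
  ![PresentedGroup.of 2 * (PresentedGroup.of 0)⁻¹, PresentedGroup.of 1, PresentedGroup.of 0]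

/-- The map `x ↦ c, y ↦ b, z ↦ a c`. -/
def gmap : Fin 3 → PresentedGroup (traagRels Gamma1) :=
  ![PresentedGroup.of 2, PresentedGroup.of 1, PresentedGroup.of 0 * PresentedGroup.of 2]

lemma fmap_rels : ∀ r ∈ traagRels Gamma1, FreeGroup.lift fmap r = 1 := by
  set x : PresentedGroup (traagRels Gamma2) := PresentedGroup.of 0
  set y : PresentedGroup (traagRels Gamma2) := PresentedGroup.of 1
  set z : PresentedGroup (traagRels Gamma2) := PresentedGroup.of 2
  have e1 : y * x * y = x := mul_inv_eq_one.mp g2_rel_x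
  have f1 : y * z * y = z := mul_inv_eq_one.mp g2_rel_z
  have e1' : y * x = x * y⁻¹ := eq_mul_inv_of_mul_eq e1
  have f1' : y * z = z * y⁻¹ := eq_mul_inv_of_mul_eq f1
  have e2 : x⁻¹ * y * x = y⁻¹ := by rw [mul_assoc, e1']; group
  have f3 : z * y⁻¹ * z⁻¹ = y := by rw [← f1']; group
  have key : (z * x⁻¹) * y * (z * x⁻¹)⁻¹ * y⁻¹ = 1 := by
    have h1 : (z * x⁻¹) * y * (z * x⁻¹)⁻¹ * y⁻¹ = z * (x⁻¹ * y * x) * z⁻¹ * y⁻¹ := by group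
    rw [h1, e2, f3, mul_inv_cancel]
  rintro r (⟨a, b, hab, rfl⟩ | ⟨a, b, hab, rfl⟩)
  · rcases hab with ⟨rfl, rfl⟩ | ⟨rfl, rfl⟩
    · simpa [fmap] using key
    · simp only [fmap, map_mul, map_inv, FreeGroup.lift_apply_of, Matrix.cons_val_zero,
        Matrix.cons_val_one, Matrix.head_cons]
      show y * (z * x⁻¹) * y⁻¹ * (z * x⁻¹)⁻¹ = 1
      have comm : (z * x⁻¹) * y = y * (z * x⁻¹) :=
        mul_inv_eq_iff_eq_mul.mp (mul_inv_eq_one.mp key)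
      rw [comm.symm]
      group
  · obtain ⟨rfl, rfl⟩ := hab
    simpa [fmap] using g2_rel_x
  
lemma gmap_rels : ∀ r ∈ traagRels Gamma2, FreeGroup.lift gmap r = 1 := by
  set a : PresentedGroup (traagRels Gamma1) := PresentedGroup.of 0
  set b : PresentedGroup (traagRels Gamma1) := PresentedGroup.of 1
  set c : PresentedGroup (traagRels Gamma1) := PresentedGroup.of 2
  rintro r (⟨u, v, hab, rfl⟩ | ⟨u, v, hab, rfl⟩)
  · exact absurd hab id
  · obtain ⟨rfl, rfl | rfl⟩ := hab
    · simpa [gmap] using g1_rel_bc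
    · simp only [gmap, map_mul, map_inv, FreeGroup.lift_apply_of, Matrix.cons_val_zero,
        Matrix.cons_val_one, Matrix.head_cons]
      show b * (a * c) * b * (a * c)⁻¹ = 1
      have h1 : b * (a * c) * b * (a * c)⁻¹ = (b * a) * (c * b * c⁻¹ * a⁻¹) := by group
      have hba : b * a = a * b := g1_rel_comm.symm
      have h2 : a * b * (c * b * c⁻¹ * a⁻¹) = a * (b * c * b * c⁻¹) * a⁻¹ := by group
      rw [h1, hba, h2, g1_rel_bc, mul_one, mul_inv_cancel]

theorem gamma1_not_iso_gamma2_but_groups_iso :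
    ¬ MixedGraph.Iso Gamma1 Gamma2 ∧
      Nonempty (PresentedGroup (traagRels Gamma1) ≃* PresentedGroup (traagRels Gamma2)) := by
  constructor
  · rintro ⟨e, hund, _⟩
    exact (hund 0 1).mp (Or.inl ⟨rfl, rfl⟩)
  · refine ⟨MonoidHom.toMulEquiv (PresentedGroup.toGroup fmap_rels) (PresentedGroup.toGroup gmap_rels) ?_ ?_⟩
    · apply PresentedGroup.ext
      intro i
      fin_cases i <;>
        simp [fmap, gmap, PresentedGroup.toGroup.of, map_mul, map_inv]
    · apply PresentedGroup.ext
      intro i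
      fin_cases i <;>
        simp [fmap, gmap, PresentedGroup.toGroup.of, map_mul, map_inv]
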